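/- Every Fourier quasicrystal on ℝ^d is an almost periodic distribution: if μ is a complex measure in S*(ℝ^d) such that μ̂ is a discrete measure with |μ̂| ∈ S*(ℝ^d), then for every Schwartz function φ the function t ↦ ∫ φ(x−t) μ(dx) is Bohr almost periodic. -/

import Mathlib

open MeasureTheory Metric Filter Topology SchwartzMap
open scoped FourierTransform RealInnerProductSpace

noncomputable section

abbrev Ed (d : ℕ) := EuclideanSpace ℝ (Fin d)

/-- A set is relatively dense if some radius `R` works: every ball of radius `R` meets it. -/
def IsRelativelyDense {d : ℕ} (A : Set (Ed d)) : Prop :=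
  ∃ R : ℝ, ∀ x : Ed d, (Metric.ball x R ∩ A).Nonempty

/-- The set of ε-almost periods of a function. -/
def almostPeriods {d : ℕ} {F : Type*} [NormedAddCommGroup F] (f : Ed d → F) (ε : ℝ) :
    Set (Ed d) :=
  {τ | ∀ t : Ed d, ‖f (t + τ) - f t‖ < ε}

/-- Bohr almost periodic function on `ℝ^d`. -/
def IsBohrAP {d : ℕ} {F : Type*} [NormedAddCommGroup F] (f : Ed d → F) : Prop :=
  Continuous f ∧ ∀ ε > (0 : ℝ), IsRelativelyDense (almostPeriods f ε)

/-- The pairing of a complex measure, represented by four positive measures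
`μ = (μ₀ − μ₁) + i(μ₂ − μ₃)`, with a function. -/
def cIntegral {d : ℕ} (μp : Fin 4 → Measure (Ed d)) (g : Ed d → ℂ) : ℂ :=
  (∫ x, g x ∂(μp 0)) - (∫ x, g x ∂(μp 1)) +
    Complex.I * ((∫ x, g x ∂(μp 2)) - (∫ x, g x ∂(μp 3)))

/-! ### Auxiliary lemmas -/

lemma circle_norm (z : Circle) : ‖(z : ℂ)‖ = 1 := by
  rw [Circle.norm_coe]

lemma htg_sub {d : ℕ} (t : Ed d) :
    Function.HasTemperateGrowth (fun x : Ed d => x - t) := by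
  apply Function.HasTemperateGrowth.of_fderiv (k := 1) (C := 1 + ‖t‖)
  · have h : (fderiv ℝ (fun x : Ed d => x - t)) =
        fun _ => ContinuousLinearMap.id ℝ (Ed d) := by
      funext x
      rw [fderiv_sub_const, fderiv_id']
    rw [h]
    exact Function.HasTemperateGrowth.const _
  · exact differentiable_id.sub_const t
  · intro x
    have h1 : ‖x - t‖ ≤ ‖x‖ + ‖t‖ := norm_sub_le x t
    have h2 : ((1:ℝ) + ‖x‖) ^ 1 = 1 + ‖x‖ := pow_one _
    nlinarith [norm_nonneg x, norm_nonneg t]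

/-- Translation by `t` as a continuous linear map on Schwartz space. -/
def translateS {d : ℕ} (t : Ed d) : 𝓢(Ed d, ℂ) →L[ℝ] 𝓢(Ed d, ℂ) :=
  SchwartzMap.compCLM ℝ (htg_sub t)
    ⟨1, 1 + ‖t‖, by
      intro x
      have h1 : ‖x‖ ≤ ‖x - t‖ + ‖t‖ := by
        simpa using norm_add_le (x - t) t
      have h2 : ((1:ℝ) + ‖x - t‖) ^ 1 = 1 + ‖x - t‖ := pow_one _
      nlinarith [norm_nonneg (x - t), norm_nonneg t]⟩

lemma translateS_apply {d : ℕ} (t : Ed d) (φ : 𝓢(Ed d, ℂ)) (x : Ed d) :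
    translateS t φ x = φ (x - t) := rfl

/-- The inverse Fourier transform turns translation into modulation. -/
lemma fourierIntegralInv_comp_sub {d : ℕ} (f : Ed d → ℂ) (t w : Ed d) :
    𝓕⁻ (fun x => f (x - t)) w = (𝐞 ⟪t, w⟫ : ℂ) • 𝓕⁻ f w := by
  have h := VectorFourier.fourierIntegral_comp_add_right 𝐞 (volume : Measure (Ed d))
      (-(innerₗ (Ed d))) f (-t)
  have h2 : (fun x : Ed d => f (x - t)) = f ∘ fun v => v + -t := by
    funext x; simp [sub_eq_add_neg]
  show VectorFourier.fourierIntegral 𝐞 volume (-innerₗ (Ed d)) (fun x => f (x - t)) w =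
    (𝐞 ⟪t, w⟫ : ℂ) • VectorFourier.fourierIntegral 𝐞 volume (-innerₗ (Ed d)) f w
  rw [h2, h]
  simp [Circle.smul_def]

/-- Simultaneous almost periods of finitely many characters are relatively dense. -/
lemma relDense_char {d : ℕ} (v : ℕ → Ed d) (N : ℕ) {δ : ℝ} (hδ : 0 < δ) :
    IsRelativelyDense {τ : Ed d | ∀ n < N, ‖(𝐞 ⟪τ, v n⟫ : ℂ) - 1‖ < δ} := by
  set Φ : Ed d → (Fin N → ℂ) := fun τ i => (𝐞 ⟪τ, v i⟫ : ℂ) with hΦ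
  have hK : IsCompact (closure (Set.range Φ)) := by
    have hsub : Set.range Φ ⊆ Metric.closedBall 0 1 := by
      rintro _ ⟨τ, rfl⟩
      rw [Metric.mem_closedBall, dist_zero_right]
      refine (pi_norm_le_iff_of_nonneg zero_le_one).2 fun i => ?_
      simp [hΦ, circle_norm]
    exact (isCompact_closedBall (0 : Fin N → ℂ) 1).of_isClosed_subset isClosed_closure
      (closure_minimal hsub Metric.isClosed_closedBall)
  have hcover : closure (Set.range Φ) ⊆ ⋃ τ : Ed d, Metric.ball (Φ τ) (δ / 2) := by
    intro z hz
    obtain ⟨y, ⟨τ, rfl⟩, hyz⟩ := Metric.mem_closure_iff.1 hz (δ / 2) (by positivity)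
    exact Set.mem_iUnion.2 ⟨τ, Metric.mem_ball.2 hyz⟩
  obtain ⟨F, hF⟩ := hK.elim_finite_subcover (fun τ : Ed d => Metric.ball (Φ τ) (δ / 2))
      (fun τ => Metric.isOpen_ball) hcover
  refine ⟨1 + ∑ τ ∈ F, ‖τ‖, fun x => ?_⟩
  have hx : Φ x ∈ closure (Set.range Φ) := subset_closure ⟨x, rfl⟩
  obtain ⟨τ₀, hτ₀F, hτ₀⟩ := Set.mem_iUnion₂.1 (hF hx)
  refine ⟨x - τ₀, ?_, ?_⟩
  · rw [Metric.mem_ball, dist_eq_norm]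
    have h1 : ‖τ₀‖ ≤ ∑ τ ∈ F, ‖τ‖ :=
      Finset.single_le_sum (fun τ _ => norm_nonneg τ) hτ₀F
    have h2 : x - τ₀ - x = -τ₀ := by abel
    rw [h2, norm_neg]
    linarith
  · intro n hn
    have hdist : dist (Φ x) (Φ τ₀) < δ / 2 := Metric.mem_ball.1 hτ₀
    have hcoord : ‖Φ x ⟨n, hn⟩ - Φ τ₀ ⟨n, hn⟩‖ < δ / 2 := by
      refine lt_of_le_of_lt ?_ hdist
      simpa [dist_eq_norm] using dist_le_pi_dist (Φ x) (Φ τ₀) ⟨n, hn⟩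
    have hne : (𝐞 ⟪τ₀, v n⟫ : ℂ) ≠ 0 := Circle.coe_ne_zero _
    have key : (𝐞 ⟪x - τ₀, v n⟫ : ℂ) - 1 =
        ((𝐞 ⟪x, v n⟫ : ℂ) - (𝐞 ⟪τ₀, v n⟫ : ℂ)) * ((𝐞 ⟪τ₀, v n⟫ : ℂ))⁻¹ := by
      have hmul : (𝐞 ⟪x - τ₀, v n⟫ : ℂ) * (𝐞 ⟪τ₀, v n⟫ : ℂ) = (𝐞 ⟪x, v n⟫ : ℂ) := by
        rw [← Circle.coe_mul, ← AddChar.map_add_eq_mul, ← inner_add_left, sub_add_cancel]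
      rw [eq_mul_inv_iff_mul_eq₀ hne, sub_mul, one_mul, hmul]
    have hnorm : ‖(𝐞 ⟪x - τ₀, v n⟫ : ℂ) - 1‖ = ‖Φ x ⟨n, hn⟩ - Φ τ₀ ⟨n, hn⟩‖ := by
      rw [key, norm_mul, norm_inv, circle_norm, inv_one, mul_one]
    rw [hnorm]
    exact hcoord.trans (by linarith)

/-- An absolutely convergent series of characters is Bohr almost periodic. -/
lemma isBohrAP_tsum_char {d : ℕ} (c : ℕ → ℂ) (v : ℕ → Ed d)
    (hc : Summable fun n => ‖c n‖) :
    IsBohrAP (fun t : Ed d => ∑' n, c n * (𝐞 ⟪t, v n⟫ : ℂ)) := by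
  have hterm : ∀ (t : Ed d) (n : ℕ), ‖c n * (𝐞 ⟪t, v n⟫ : ℂ)‖ = ‖c n‖ := fun t n => by
    rw [norm_mul, circle_norm, mul_one]
  have hsummable : ∀ t : Ed d, Summable fun n => c n * (𝐞 ⟪t, v n⟫ : ℂ) := by
    intro t
    apply Summable.of_norm
    simpa only [hterm] using hc
  constructor
  · refine continuous_tsum (fun n => ?_) hc (fun n t => le_of_eq (hterm t n))
    exact continuous_const.mul
      (continuous_subtype_val.comp
        (Real.continuous_fourierChar.comp (continuous_id.inner continuous_const)))
  · intro ε hε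
    set C := ∑' n, ‖c n‖ with hC
    have hC0 : 0 ≤ C := tsum_nonneg fun n => norm_nonneg _
    obtain ⟨N, hN⟩ : ∃ N : ℕ, ∑' n : ℕ, ‖c (n + N)‖ < ε / 8 := by
      have h := tendsto_sum_nat_add fun n => ‖c n‖
      have := (h.eventually (eventually_lt_nhds (show (0:ℝ) < ε / 8 by positivity))).exists
      obtain ⟨N, hN⟩ := this
      exact ⟨N, by simpa using hN⟩
    set δ : ℝ := min 1 (ε / (4 * (C + 1))) with hδdef
    have hδ0 : 0 < δ := lt_min one_pos (by positivity)
    obtain ⟨R, hR⟩ := relDense_char v N hδ0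
    refine ⟨R, fun x => ?_⟩
    obtain ⟨τ, hτball, hτ⟩ := hR x
    refine ⟨τ, hτball, fun t => ?_⟩
    have hdiff : ∀ n : ℕ, c n * (𝐞 ⟪t + τ, v n⟫ : ℂ) - c n * (𝐞 ⟪t, v n⟫ : ℂ)
        = c n * (𝐞 ⟪t, v n⟫ : ℂ) * ((𝐞 ⟪τ, v n⟫ : ℂ) - 1) := by
      intro n
      have : (𝐞 ⟪t + τ, v n⟫ : ℂ) = (𝐞 ⟪t, v n⟫ : ℂ) * (𝐞 ⟪τ, v n⟫ : ℂ) := by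
        rw [← Circle.coe_mul, ← AddChar.map_add_eq_mul, ← inner_add_left]
      rw [this]; ring
    set g : ℕ → ℝ := fun n => ‖c n‖ * ‖(𝐞 ⟪τ, v n⟫ : ℂ) - 1‖ with hg
    have hgnorm : ∀ n : ℕ, ‖c n * (𝐞 ⟪t + τ, v n⟫ : ℂ) - c n * (𝐞 ⟪t, v n⟫ : ℂ)‖ = g n := by
      intro n
      rw [hdiff n, norm_mul, norm_mul, circle_norm, mul_one]
    have hg2 : ∀ n, g n ≤ 2 * ‖c n‖ := by
      intro n
      have h1 : ‖(𝐞 ⟪τ, v n⟫ : ℂ) - 1‖ ≤ 2 := by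
        calc ‖(𝐞 ⟪τ, v n⟫ : ℂ) - 1‖ ≤ ‖(𝐞 ⟪τ, v n⟫ : ℂ)‖ + ‖(1:ℂ)‖ := norm_sub_le _ _
        _ = 2 := by rw [circle_norm, norm_one]; norm_num
      calc g n ≤ ‖c n‖ * 2 := mul_le_mul_of_nonneg_left h1 (norm_nonneg _)
      _ = 2 * ‖c n‖ := by ring
    have hgsum : Summable g := by
      refine Summable.of_nonneg_of_le (fun n => by positivity) hg2 ?_
      simpa using hc.mul_left 2
    have key : ‖(∑' n, c n * (𝐞 ⟪t + τ, v n⟫ : ℂ)) - ∑' n, c n * (𝐞 ⟪t, v n⟫ : ℂ)‖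
        ≤ ∑' n, g n := by
      rw [← Summable.tsum_sub (hsummable (t + τ)) (hsummable t)]
      refine (norm_tsum_le_tsum_norm ?_).trans_eq (tsum_congr hgnorm)
      · simpa only [hgnorm] using hgsum
    have hsplit : ∑' n, g n = (∑ n ∈ Finset.range N, g n) + ∑' n, g (n + N) :=
      (Summable.sum_add_tsum_nat_add N hgsum).symm
    have hfin : ∑ n ∈ Finset.range N, g n ≤ ε / 4 := by
      have hle : ∀ n ∈ Finset.range N, g n ≤ ‖c n‖ * δ := by
        intro n hn
        exact mul_le_mul_of_nonneg_left (le_of_lt (hτ n (Finset.mem_range.1 hn)))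
          (norm_nonneg _)
      calc ∑ n ∈ Finset.range N, g n ≤ ∑ n ∈ Finset.range N, ‖c n‖ * δ :=
            Finset.sum_le_sum hle
      _ = (∑ n ∈ Finset.range N, ‖c n‖) * δ := by rw [Finset.sum_mul]
      _ ≤ C * δ := by
            refine mul_le_mul_of_nonneg_right ?_ hδ0.le
            exact Summable.sum_le_tsum _ (fun n _ => norm_nonneg _) hc
      _ ≤ C * (ε / (4 * (C + 1))) :=
            mul_le_mul_of_nonneg_left (min_le_right _ _) hC0
      _ ≤ ε / 4 := by
            rw [div_mul_eq_div_div]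
            rw [mul_div_assoc']
            refine div_le_of_le_mul₀ (by positivity) (by positivity) ?_
            nlinarith
    have htail : ∑' n, g (n + N) ≤ ε / 4 := by
      have h1 : ∑' n, g (n + N) ≤ ∑' n, 2 * ‖c (n + N)‖ := by
        refine Summable.tsum_le_tsum (fun n => hg2 _) ((summable_nat_add_iff N).2 hgsum) ?_
        simpa using ((summable_nat_add_iff N).2 hc).mul_left 2
      have h2 : ∑' n, 2 * ‖c (n + N)‖ = 2 * ∑' n, ‖c (n + N)‖ := tsum_mul_left
      calc ∑' n, g (n + N) ≤ 2 * ∑' n, ‖c (n + N)‖ := by rw [← h2]; exact h1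
      _ ≤ 2 * (ε / 8) := by linarith
      _ = ε / 4 := by ring
    calc ‖(∑' n, c n * (𝐞 ⟪t + τ, v n⟫ : ℂ)) - ∑' n, c n * (𝐞 ⟪t, v n⟫ : ℂ)‖
        ≤ ∑' n, g n := key
    _ ≤ ε / 4 + ε / 4 := by rw [hsplit]; exact add_le_add hfin htail
    _ < ε := by linarith

/-- Every Fourier quasicrystal is an almost periodic distribution: if `μ` is a complex
measure belonging to `S*(ℝ^d)` whose Fourier transform is a discrete measure `Σ b_n δ_{s_n}`
with `|μ̂| ∈ S*(ℝ^d)`, then for every Schwartz `φ` the function `t ↦ ∫ φ(x−t) μ(dx)` is Bohr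
almost periodic. -/
theorem fourier_quasicrystal_is_AP_distribution {d : ℕ}
    (μp : Fin 4 → Measure (Ed d))
    (hint : ∀ (φ : 𝓢(Ed d, ℂ)) (i : Fin 4), Integrable (fun x => φ x) (μp i))
    (T : 𝓢(Ed d, ℂ) →L[ℂ] ℂ)
    (hT : ∀ φ : 𝓢(Ed d, ℂ), T φ = cIntegral μp (fun x => φ x))
    (b : ℕ → ℂ) (s : ℕ → Ed d) (hs : Function.Injective s)
    (hdisc : ∀ n : ℕ, ∃ ε > (0 : ℝ), ∀ m : ℕ, s m ∈ Metric.ball (s n) ε → m = n)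
    (hFT : ∀ φ : 𝓢(Ed d, ℂ),
      T (SchwartzMap.fourierTransformCLM ℂ φ) = ∑' n : ℕ, b n * φ (s n))
    (habs : ∀ ψ : 𝓢(Ed d, ℂ), Summable fun n => ‖b n‖ * ‖ψ (s n)‖) :
    ∀ φ : 𝓢(Ed d, ℂ), IsBohrAP (fun t : Ed d => cIntegral μp (fun x => φ (x - t))) := by
  intro φ
  set ψ : 𝓢(Ed d, ℂ) := (FourierTransform.fourierCLE ℂ 𝓢(Ed d, ℂ)).symm φ with hψ
  have hψcoe : ∀ w : Ed d, ψ w = 𝓕⁻ (⇑φ) w := by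
    intro w
    rw [hψ]
    rw [fourierTransformCLE_symm_apply, SchwartzMap.fourierInv_coe]
  have hrep : ∀ t : Ed d, cIntegral μp (fun x => φ (x - t))
      = ∑' n : ℕ, (b n * ψ (s n)) * (𝐞 ⟪t, s n⟫ : ℂ) := by
    intro t
    have h1 : T (translateS t φ) = cIntegral μp (fun x => φ (x - t)) := hT (translateS t φ)
    set ξ : 𝓢(Ed d, ℂ) := (FourierTransform.fourierCLE ℂ 𝓢(Ed d, ℂ)).symm (translateS t φ) with hξ
    have h2 : SchwartzMap.fourierTransformCLM ℂ ξ = translateS t φ :=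
      (FourierTransform.fourierCLE ℂ 𝓢(Ed d, ℂ)).apply_symm_apply (translateS t φ)
    have h3 : T (translateS t φ) = ∑' n : ℕ, b n * ξ (s n) := by
      rw [← h2, hFT]
    have h4 : ∀ n : ℕ, ξ (s n) = (𝐞 ⟪t, s n⟫ : ℂ) * ψ (s n) := by
      intro n
      have hξcoe : ξ (s n) = 𝓕⁻ (fun x => φ (x - t)) (s n) := by
        rw [hξ, fourierTransformCLE_symm_apply, SchwartzMap.fourierInv_coe]
        rfl
      rw [hξcoe, fourierIntegralInv_comp_sub (⇑φ) t (s n), hψcoe, smul_eq_mul]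
    rw [← h1, h3]
    refine tsum_congr fun n => ?_
    rw [h4 n]; ring
  have hsum : Summable fun n : ℕ => ‖b n * ψ (s n)‖ := by
    simp only [norm_mul]
    exact habs ψ
  have hfun : (fun t : Ed d => cIntegral μp (fun x => φ (x - t)))
      = fun t : Ed d => ∑' n : ℕ, (b n * ψ (s n)) * (𝐞 ⟪t, s n⟫ : ℂ) := funext hrep
  rw [hfun]
  exact isBohrAP_tsum_char (fun n => b n * ψ (s n)) s hsum
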